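/- Let W be a single-basin potential on the path graph on ℓ vertices and H = L + diag(W). Then the spectral gap γ_H of H satisfies γ_H ≥ 1/(ℓ(ℓ−1)), a bound independent of W. -/

import Mathlib

open Matrix

noncomputable instance (n : ℕ) : DecidableRel (SimpleGraph.pathGraph n).Adj :=
  Classical.decRel _

noncomputable def hamiltonian {V : Type*} [Fintype V] [DecidableEq V]
    (G : SimpleGraph V) [DecidableRel G.Adj] (W : V → ℝ) : Matrix V V ℝ :=
  G.lapMatrix ℝ + Matrix.diagonal W

lemma hamiltonian_isHermitian {V : Type*} [Fintype V] [DecidableEq V]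
    (G : SimpleGraph V) [DecidableRel G.Adj] (W : V → ℝ) :
    (hamiltonian G W).IsHermitian :=
  (SimpleGraph.posSemidef_lapMatrix ℝ G).isHermitian.add (Matrix.isHermitian_diagonal W)

noncomputable def sortedEigenvalues {n : Type*} [Fintype n] [DecidableEq n]
    {A : Matrix n n ℝ} (hA : A.IsHermitian) : Fin (Fintype.card n) → ℝ :=
  fun i =>
    let f : Fin (Fintype.card n) → ℝ := hA.eigenvalues ∘ (Fintype.equivFin n).symm
    f (Tuple.sort f i)

/-- Gap between the two smallest eigenvalues, counted with multiplicity. -/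
noncomputable def specGap {n : Type*} [Fintype n] [DecidableEq n]
    {A : Matrix n n ℝ} (hA : A.IsHermitian) : ℝ :=
  if h : 2 ≤ Fintype.card n then
    sortedEigenvalues hA ⟨1, by omega⟩ - sortedEigenvalues hA ⟨0, by omega⟩
  else 0

def ConnInG {V : Type*} (G : SimpleGraph V) (S : Set V) : Prop :=
  (G.induce S).Preconnected

def SingleBasin {V : Type*} (G : SimpleGraph V) (W : V → ℝ) : Prop :=
  ∀ E : ℝ, ConnInG G {x | W x < E}


namespace Stmt16Aux
open Finset SimpleGraph
variable {ℓ : ℕ}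



noncomputable def extv (x : Fin ℓ → ℝ) : ℕ → ℝ := fun k => if h : k < ℓ then x ⟨k, h⟩ else 0

lemma ext_coe (x : Fin ℓ → ℝ) (i : Fin ℓ) : extv x ↑i = x i := dif_pos i.isLt

lemma ext_zero {x : Fin ℓ → ℝ} {k : ℕ} (h : ¬ k < ℓ) : extv x k = 0 := dif_neg h

lemma dot_ext (x y : Fin ℓ → ℝ) : x ⬝ᵥ y = ∑ k ∈ range ℓ, extv x k * extv y k := by
  rw [dotProduct, ← Fin.sum_univ_eq_sum_range (fun k => extv x k * extv y k) ℓ]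
  exact Finset.sum_congr rfl (fun i _ => by rw [ext_coe, ext_coe])







lemma sum_indic (c : ℕ) (F : ℕ → ℝ) :
    (∑ j : Fin ℓ, if (j : ℕ) = c then F ↑j else 0) = if c < ℓ then F c else 0 := by
  by_cases h : c < ℓ
  · rw [if_pos h, Finset.sum_eq_single (⟨c, h⟩ : Fin ℓ)]
    · simp
    · intro b _ hb
      rw [if_neg]
      intro hbc
      exact hb (Fin.ext hbc)
    · simp
  · rw [if_neg h, Finset.sum_eq_zero]
    intro j _
    rw [if_neg]
    intro hj
    exact h (hj ▸ j.isLt)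

lemma nbr_sum (i : Fin ℓ) (F : ℕ → ℝ) :
    (∑ j : Fin ℓ, if (pathGraph ℓ).Adj i j then F ↑j else 0) =
      (if (i : ℕ) + 1 < ℓ then F ((i : ℕ) + 1) else 0) +
      (if 0 < (i : ℕ) then F ((i : ℕ) - 1) else 0) := by
  have hsplit : ∀ j : Fin ℓ, (if (pathGraph ℓ).Adj i j then F ↑j else 0) =
      (if (j : ℕ) = (i : ℕ) + 1 then F ↑j else 0) +
      (if 0 < (i : ℕ) ∧ (j : ℕ) = (i : ℕ) - 1 then F ↑j else 0) := by
    intro j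
    by_cases hadj : (pathGraph ℓ).Adj i j
    · have h' := pathGraph_adj.mp hadj
      rw [if_pos hadj]
      by_cases h1 : (j : ℕ) = (i : ℕ) + 1
      · rw [if_pos h1, if_neg (by omega), add_zero]
      · rw [if_neg h1, if_pos (by omega), zero_add]
    · have h' : ¬((i:ℕ) + 1 = (j:ℕ) ∨ (j:ℕ) + 1 = (i:ℕ)) := fun h => hadj (pathGraph_adj.mpr h)
      rw [if_neg hadj, if_neg (by omega), if_neg (by omega), add_zero]
  rw [Finset.sum_congr rfl (fun j _ => hsplit j), Finset.sum_add_distrib, sum_indic]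
  have h2 : (∑ j : Fin ℓ, if 0 < (i:ℕ) ∧ (j : ℕ) = (i : ℕ) - 1 then F ↑j else 0)
      = if 0 < (i : ℕ) then F ((i : ℕ) - 1) else 0 := by
    by_cases h0 : 0 < (i : ℕ)
    · simp only [h0, true_and, if_true]
      rw [sum_indic ((i:ℕ)-1) F, if_pos (by omega)]
    · simp only [h0, false_and, if_false]
      exact Finset.sum_eq_zero (fun j _ => rfl)
  rw [h2]

lemma pg_double_sum (F : ℕ → ℕ → ℝ) :
    (∑ i : Fin ℓ, ∑ j : Fin ℓ, if (pathGraph ℓ).Adj i j then F ↑i ↑j else 0) =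
      ∑ k ∈ range ℓ, (if k + 1 < ℓ then F k (k+1) + F (k+1) k else 0) := by
  have hsplit : ∀ i j : Fin ℓ, (if (pathGraph ℓ).Adj i j then F ↑i ↑j else 0) =
      (if (j : ℕ) = (i : ℕ) + 1 then F ↑i ↑j else 0) +
      (if (i : ℕ) = (j : ℕ) + 1 then F ↑i ↑j else 0) := by
    intro i j
    by_cases hadj : (pathGraph ℓ).Adj i j
    · have h' := pathGraph_adj.mp hadj
      rw [if_pos hadj]
      by_cases h1 : (j : ℕ) = (i : ℕ) + 1
      · rw [if_pos h1, if_neg (by omega), add_zero]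
      · rw [if_neg h1, if_pos (by omega), zero_add]
    · have h' : ¬((i:ℕ) + 1 = (j:ℕ) ∨ (j:ℕ) + 1 = (i:ℕ)) := fun h => hadj (pathGraph_adj.mpr h)
      rw [if_neg hadj, if_neg (by omega), if_neg (by omega), add_zero]
  simp only [hsplit, Finset.sum_add_distrib]
  have t1 : (∑ i : Fin ℓ, ∑ j : Fin ℓ, if (j : ℕ) = (i : ℕ) + 1 then F ↑i ↑j else 0)
      = ∑ k ∈ range ℓ, (if k + 1 < ℓ then F k (k+1) else 0) := by
    have h : ∀ i : Fin ℓ, (∑ j : Fin ℓ, if (j : ℕ) = (i : ℕ) + 1 then F ↑i ↑j else 0)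
        = if (i:ℕ) + 1 < ℓ then F ↑i ((i:ℕ)+1) else 0 := fun i => sum_indic ((i:ℕ)+1) (fun c => F ↑i c)
    rw [Finset.sum_congr rfl (fun i _ => h i)]
    exact Fin.sum_univ_eq_sum_range (fun k => if k + 1 < ℓ then F k (k+1) else 0) ℓ
  have t2 : (∑ i : Fin ℓ, ∑ j : Fin ℓ, if (i : ℕ) = (j : ℕ) + 1 then F ↑i ↑j else 0)
      = ∑ k ∈ range ℓ, (if k + 1 < ℓ then F (k+1) k else 0) := by
    rw [Finset.sum_comm]
    have h : ∀ j : Fin ℓ, (∑ i : Fin ℓ, if (i : ℕ) = (j : ℕ) + 1 then F ↑i ↑j else 0)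
        = if (j:ℕ) + 1 < ℓ then F ((j:ℕ)+1) ↑j else 0 := fun j => sum_indic ((j:ℕ)+1) (fun c => F c ↑j)
    rw [Finset.sum_congr rfl (fun j _ => h j)]
    exact Fin.sum_univ_eq_sum_range (fun k => if k + 1 < ℓ then F (k+1) k else 0) ℓ
  rw [t1, t2, ← Finset.sum_add_distrib]
  refine Finset.sum_congr rfl (fun k _ => ?_)
  by_cases h : k + 1 < ℓ
  · rw [if_pos h, if_pos h, if_pos h]
  · rw [if_neg h, if_neg h, if_neg h, add_zero]


lemma hamil_mulVec (W : Fin ℓ → ℝ) (x : Fin ℓ → ℝ) (i : Fin ℓ) :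
    (hamiltonian (pathGraph ℓ) W *ᵥ x) i =
      (∑ j : Fin ℓ, if (pathGraph ℓ).Adj i j then x i - x j else 0) + W i * x i := by
  rw [hamiltonian, add_mulVec, Pi.add_apply, mulVec_diagonal,
    SimpleGraph.lapMatrix_mulVec_apply]
  congr 1
  rw [SimpleGraph.degree_eq_sum_if_adj, Finset.sum_mul]
  have h1 : (∑ u ∈ (pathGraph ℓ).neighborFinset i, x u)
      = ∑ j : Fin ℓ, if (pathGraph ℓ).Adj i j then x j else 0 := by
    rw [SimpleGraph.neighborFinset_eq_filter, Finset.sum_filter]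
  rw [h1, ← Finset.sum_sub_distrib]
  exact Finset.sum_congr rfl (fun j _ => by split <;> simp

    )




lemma dot_hamil (W : Fin ℓ → ℝ) (x : Fin ℓ → ℝ) :
    x ⬝ᵥ (hamiltonian (pathGraph ℓ) W *ᵥ x) =
      (∑ i : Fin ℓ, ∑ j : Fin ℓ, if (pathGraph ℓ).Adj i j then x i * (x i - x j) else 0)
      + ∑ i : Fin ℓ, W i * (x i * x i) := by
  rw [dotProduct, ← Finset.sum_add_distrib]
  refine Finset.sum_congr rfl (fun i _ => ?_)
  rw [hamil_mulVec, mul_add, Finset.mul_sum]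
  congr 1
  · exact Finset.sum_congr rfl (fun j _ => by split <;> simp)
  · ring

lemma quad_form (W : Fin ℓ → ℝ) (x : Fin ℓ → ℝ) :
    x ⬝ᵥ (hamiltonian (pathGraph ℓ) W *ᵥ x) =
      (∑ k ∈ range ℓ, if k + 1 < ℓ then (extv x k - extv x (k+1))^2 else 0)
      + ∑ i : Fin ℓ, W i * (x i * x i) := by
  rw [dot_hamil]
  congr 1
  have h := pg_double_sum (ℓ := ℓ) (fun a b => extv x a * (extv x a - extv x b))
  have h2 : (∑ i : Fin ℓ, ∑ j : Fin ℓ, if (pathGraph ℓ).Adj i j then x i * (x i - x j) else 0)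
      = ∑ i : Fin ℓ, ∑ j : Fin ℓ, if (pathGraph ℓ).Adj i j
          then extv x ↑i * (extv x ↑i - extv x ↑j) else 0 := by
    refine Finset.sum_congr rfl (fun i _ => Finset.sum_congr rfl (fun j _ => ?_))
    rw [ext_coe, ext_coe]
  rw [h2, h]
  refine Finset.sum_congr rfl (fun k _ => ?_)
  split
  · ring
  · rfl

lemma habs_ineq (W : Fin ℓ → ℝ) (u : Fin ℓ → ℝ) :
    (fun x => |u x|) ⬝ᵥ (hamiltonian (pathGraph ℓ) W *ᵥ fun x => |u x|) ≤
      u ⬝ᵥ (hamiltonian (pathGraph ℓ) W *ᵥ u) := by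
  rw [quad_form, quad_form]
  have habs : ∀ k, extv (fun x => |u x|) k = |extv u k| := by
    intro k
    by_cases h : k < ℓ
    · simp [extv, h]
    · simp [extv, h]
  refine add_le_add (Finset.sum_le_sum (fun k _ => ?_)) (le_of_eq (Finset.sum_congr rfl (fun i _ => ?_)))
  · split
    · rw [habs, habs]
      have := abs_sub_abs_le_abs_sub (extv u k) (extv u (k+1))
      have h2 : |(|extv u k| - |extv u (k+1)|)| ≤ |extv u k - extv u (k+1)| := abs_abs_sub_abs_le_abs_sub _ _
      calc (|extv u k| - |extv u (k+1)|)^2 ≤ |extv u k - extv u (k+1)|^2 := by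
            rw [← sq_abs (|extv u k| - |extv u (k+1)|)]
            exact pow_le_pow_left₀ (abs_nonneg _) h2 2
        _ = (extv u k - extv u (k+1))^2 := sq_abs _
    · rfl
  · simp [abs_mul_abs_self]



variable {n : Type*} [Fintype n] [DecidableEq n] {A : Matrix n n ℝ} (hA : A.IsHermitian)

/-- the `i`-th eigenvector, as a plain function -/
noncomputable def uvec (i : n) : n → ℝ := hA.eigenvectorBasis i

lemma repr_eq_dot (f : n → ℝ) (i : n) :
    hA.eigenvectorBasis.repr (WithLp.toLp 2 f) i = uvec hA i ⬝ᵥ f := by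
  rw [hA.eigenvectorBasis.repr_apply_apply]
  simp [PiLp.inner_apply, dotProduct, RCLike.inner_apply, uvec, mul_comm]

lemma mulVec_uvec (i : n) : A *ᵥ uvec hA i = hA.eigenvalues i • uvec hA i :=
  hA.mulVec_eigenvectorBasis i

lemma uvec_dot (i j : n) : uvec hA i ⬝ᵥ uvec hA j = if i = j then 1 else 0 := by
  have h := orthonormal_iff_ite.mp hA.eigenvectorBasis.orthonormal i j
  rw [PiLp.inner_apply] at h
  simpa [dotProduct, RCLike.inner_apply, uvec, mul_comm] using h

lemma repr_mulVec (f : n → ℝ) (i : n) :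
    hA.eigenvectorBasis.repr (WithLp.toLp 2 (A *ᵥ f)) i = hA.eigenvalues i * hA.eigenvectorBasis.repr (WithLp.toLp 2 f) i := by
  rw [repr_eq_dot, repr_eq_dot, dotProduct_mulVec]
  have hT : Aᵀ = A := by
    rw [← Matrix.conjTranspose_eq_transpose_of_trivial]; exact hA
  have h1 : ∀ v : n → ℝ, v ᵥ* A = A *ᵥ v := by
    intro v
    conv_lhs => rw [← hT]
    exact vecMul_transpose A v
  rw [h1, mulVec_uvec hA i, smul_dotProduct]
  rfl

lemma parseval (f g : n → ℝ) :
    f ⬝ᵥ g = ∑ i, hA.eigenvectorBasis.repr (WithLp.toLp 2 f) i * hA.eigenvectorBasis.repr (WithLp.toLp 2 g) i := by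
  have h := hA.eigenvectorBasis.repr.inner_map_map (WithLp.toLp 2 f) (WithLp.toLp 2 g)
  simp only [PiLp.inner_apply, RCLike.inner_apply, starRingEnd_apply, star_trivial] at h
  rw [dotProduct]
  simpa [mul_comm] using h.symm

lemma dot_self_expand (f : n → ℝ) :
    f ⬝ᵥ f = ∑ i, (hA.eigenvectorBasis.repr (WithLp.toLp 2 f) i)^2 := by
  rw [parseval hA]
  exact Finset.sum_congr rfl (fun i _ => (sq _).symm)

lemma dot_mulVec_expand (f : n → ℝ) :
    f ⬝ᵥ (A *ᵥ f) = ∑ i, hA.eigenvalues i * (hA.eigenvectorBasis.repr (WithLp.toLp 2 f) i)^2 := by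
  rw [parseval hA]
  refine Finset.sum_congr rfl (fun i _ => ?_)
  rw [repr_mulVec hA]
  ring



variable {n : Type*} [Fintype n] [DecidableEq n] {A : Matrix n n ℝ} (hA : A.IsHermitian)

lemma generic_gap (hn : 2 ≤ Fintype.card n)
    (habs : ∀ u : n → ℝ, (fun x => |u x|) ⬝ᵥ (A *ᵥ fun x => |u x|) ≤ u ⬝ᵥ (A *ᵥ u))
    (c : ℝ)
    (hpoin : ∀ ψ : n → ℝ, (∀ x, 0 ≤ ψ x) → ψ ⬝ᵥ ψ = 1 →
        (A *ᵥ ψ = fun x => (sortedEigenvalues hA ⟨0, by omega⟩) * ψ x) →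
        ∀ f : n → ℝ, f ⬝ᵥ ψ = 0 →
        (sortedEigenvalues hA ⟨0, by omega⟩ + c) * (f ⬝ᵥ f) ≤ f ⬝ᵥ (A *ᵥ f)) :
    c ≤ specGap hA := by
  classical
  set N := Fintype.card n with hN
  let e := Fintype.equivFin n
  let fs : Fin N → ℝ := hA.eigenvalues ∘ e.symm
  let σ := Tuple.sort fs
  have hmono := Tuple.monotone_sort fs
  let z0 : Fin N := ⟨0, by omega⟩
  let z1 : Fin N := ⟨1, by omega⟩
  set μ0 := fs (σ z0) with hμ0
  set μ1 := fs (σ z1) with hμ1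
  have hse0 : sortedEigenvalues hA (⟨0, by omega⟩ : Fin N) = μ0 := rfl
  have hse1 : sortedEigenvalues hA (⟨1, by omega⟩ : Fin N) = μ1 := rfl
  have hgap : specGap hA = μ1 - μ0 := by
    rw [specGap, dif_pos hn]
    rfl
  have hμle : μ0 ≤ μ1 := hmono (by simp [z0, z1, Fin.le_def])
  have hmin : ∀ i : n, μ0 ≤ hA.eigenvalues i := by
    intro i
    have h1 : hA.eigenvalues i = (fs ∘ σ) (σ.symm (e i)) := by
      simp [fs, Function.comp, σ]
    rw [h1]
    exact hmono (by simp [z0, Fin.le_def])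
  let i0 := e.symm (σ z0)
  let i1 := e.symm (σ z1)
  have hne : i0 ≠ i1 := by
    intro h
    have h2 : σ z0 = σ z1 := e.symm.injective h
    have h3 : z0 = z1 := σ.injective h2
    have : (0 : ℕ) = 1 := congrArg Fin.val h3
    omega
  have hev0 : hA.eigenvalues i0 = μ0 := rfl
  have hev1 : hA.eigenvalues i1 = μ1 := rfl
  set u0 : n → ℝ := uvec hA i0 with hu0def
  set u1 : n → ℝ := uvec hA i1 with hu1def
  have hu00 : u0 ⬝ᵥ u0 = 1 := by rw [hu0def, uvec_dot, if_pos rfl]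
  have hu11 : u1 ⬝ᵥ u1 = 1 := by rw [hu1def, uvec_dot, if_pos rfl]
  have hu01 : u0 ⬝ᵥ u1 = 0 := by rw [hu0def, hu1def, uvec_dot, if_neg hne]
  have hu10 : u1 ⬝ᵥ u0 = 0 := by rw [hu0def, hu1def, uvec_dot, if_neg (Ne.symm hne)]
  have hAu0 : A *ᵥ u0 = μ0 • u0 := by rw [hu0def, mulVec_uvec, hev0]
  have hAu1 : A *ᵥ u1 = μ1 • u1 := by rw [hu1def, mulVec_uvec, hev1]
  -- Rayleigh lower bound
  have hlow : ∀ v : n → ℝ, μ0 * (v ⬝ᵥ v) ≤ v ⬝ᵥ (A *ᵥ v) := by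
    intro v
    rw [dot_mulVec_expand hA, dot_self_expand hA, Finset.mul_sum]
    refine Finset.sum_le_sum (fun i _ => ?_)
    exact mul_le_mul_of_nonneg_right (hmin i) (sq_nonneg _)
  -- ground state
  set ψ : n → ℝ := fun x => |u0 x| with hψdef
  have hψnn : ∀ x, 0 ≤ ψ x := fun x => abs_nonneg _
  have hψψ : ψ ⬝ᵥ ψ = 1 := by
    rw [← hu00, dotProduct, dotProduct]
    exact Finset.sum_congr rfl (fun i _ => abs_mul_abs_self _)
  have hRu0 : u0 ⬝ᵥ (A *ᵥ u0) = μ0 := by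
    rw [hAu0, dotProduct_smul, hu00, smul_eq_mul, mul_one]
  have hψA : ψ ⬝ᵥ (A *ᵥ ψ) = μ0 := by
    have h1 : ψ ⬝ᵥ (A *ᵥ ψ) ≤ μ0 := by
      have := habs u0
      rw [hRu0] at this
      exact this
    have h2 := hlow ψ
    rw [hψψ, mul_one] at h2
    linarith
  have hall : ∀ i, (hA.eigenvalues i - μ0) * (hA.eigenvectorBasis.repr (WithLp.toLp 2 ψ) i)^2 = 0 := by
    have hsum : ∑ i, (hA.eigenvalues i - μ0) * (hA.eigenvectorBasis.repr (WithLp.toLp 2 ψ) i)^2 = 0 := by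
      have h1 := dot_mulVec_expand hA ψ
      have h2 := dot_self_expand hA ψ
      rw [hψA] at h1
      rw [hψψ] at h2
      simp only [sub_mul, Finset.sum_sub_distrib, ← h1, ← Finset.mul_sum, ← h2]
      ring
    rw [Finset.sum_eq_zero_iff_of_nonneg] at hsum
    · intro i; exact hsum i (Finset.mem_univ i)
    · intro i _
      exact mul_nonneg (by linarith [hmin i]) (sq_nonneg _)
  have hAψ : A *ᵥ ψ = fun x => μ0 * ψ x := by
    have hrepr : hA.eigenvectorBasis.repr (WithLp.toLp 2 (A *ᵥ ψ : n → ℝ))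
        = hA.eigenvectorBasis.repr (WithLp.toLp 2 (μ0 • ψ : n → ℝ)) := by
      ext i
      rw [repr_mulVec hA]
      have hsm : hA.eigenvectorBasis.repr (WithLp.toLp 2 (μ0 • ψ : n → ℝ)) i
          = μ0 * hA.eigenvectorBasis.repr (WithLp.toLp 2 ψ) i := by
        rw [repr_eq_dot, repr_eq_dot, dotProduct_smul, smul_eq_mul]
      rw [hsm]
      rcases mul_eq_zero.mp (hall i) with h | h
      · rw [show hA.eigenvalues i = μ0 by linarith]
      · rw [pow_eq_zero_iff (by norm_num)] at h
        rw [h, mul_zero, mul_zero]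
    have := WithLp.toLp_injective 2 (hA.eigenvectorBasis.repr.injective hrepr)
    funext x
    have hx := congrFun this x
    exact hx
  have hP := hpoin ψ hψnn hψψ (by rw [hse0]; exact hAψ)
  -- test vector in span of u0, u1 orthogonal to ψ
  obtain ⟨a, b, hab, horth⟩ : ∃ a b : ℝ, ¬(a = 0 ∧ b = 0) ∧
      ((a • u0 + b • u1) ⬝ᵥ ψ = 0) := by
    by_cases hcase : u0 ⬝ᵥ ψ = 0
    · exact ⟨1, 0, by simp, by simp [add_dotProduct, smul_dotProduct, hcase]⟩
    · refine ⟨u1 ⬝ᵥ ψ, -(u0 ⬝ᵥ ψ), fun h => hcase (by simpa using h.2), ?_⟩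
      simp only [add_dotProduct, smul_dotProduct, smul_eq_mul]
      ring
  set f0 : n → ℝ := a • u0 + b • u1 with hf0
  have hAf0 : A *ᵥ f0 = a • (μ0 • u0) + b • (μ1 • u1) := by
    rw [hf0, mulVec_add, mulVec_smul, mulVec_smul, hAu0, hAu1]
  have h00 : f0 ⬝ᵥ f0 = a^2 + b^2 := by
    rw [hf0]
    simp only [add_dotProduct, dotProduct_add, smul_dotProduct, dotProduct_smul, smul_eq_mul,
      hu00, hu11, hu01, hu10]
    ring
  have h01 : f0 ⬝ᵥ (A *ᵥ f0) = a^2 * μ0 + b^2 * μ1 := by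
    rw [hAf0, hf0]
    simp only [add_dotProduct, dotProduct_add, smul_dotProduct, dotProduct_smul, smul_eq_mul,
      hu00, hu11, hu01, hu10]
    ring
  have hposab : 0 < a^2 + b^2 := by
    rcases not_and_or.mp hab with h | h
    · have := sq_nonneg b
      have h2 : 0 < a^2 := by positivity
      linarith
    · have := sq_nonneg a
      have h2 : 0 < b^2 := by positivity
      linarith
  have hP0 := hP f0 horth
  rw [hse0, h00, h01] at hP0
  have hμ1c : μ0 + c ≤ μ1 := by
    have hstep : (μ0 + c) * (a^2 + b^2) ≤ μ1 * (a^2 + b^2) := by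
      have h2 : a^2 * μ0 + b^2 * μ1 ≤ μ1 * (a^2 + b^2) := by nlinarith [sq_nonneg a, sq_nonneg b]
      linarith
    exact le_of_mul_le_mul_right hstep hposab
  rw [hgap]
  linarith


variable {ℓ : ℕ}

lemma induce_walk_lt {S : Set (Fin ℓ)} {b : ℕ} (hS : ∀ s : Fin ℓ, s ∈ S → (s : ℕ) ≠ b)
    {u v : ↥S} (w : (SimpleGraph.induce S (pathGraph ℓ)).Walk u v)
    (hu : ((u : Fin ℓ) : ℕ) < b) : ((v : Fin ℓ) : ℕ) < b := by
  induction w with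
  | nil => exact hu
  | @cons a a' _ h p ih =>
    apply ih
    have hadj : (pathGraph ℓ).Adj ↑a ↑a' := h
    have h2 := pathGraph_adj.mp hadj
    have h3 := hS ↑a' a'.2
    omega

lemma zero_propagates {ψ : Fin ℓ → ℝ} {W : Fin ℓ → ℝ} {μ0 : ℝ}
    (hnn : ∀ x, 0 ≤ ψ x)
    (heig : hamiltonian (pathGraph ℓ) W *ᵥ ψ = fun x => μ0 * ψ x)
    {u v : Fin ℓ} (w : (pathGraph ℓ).Walk u v) (hu : ψ u = 0) : ψ v = 0 := by
  induction w with
  | nil => exact hu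
  | @cons a a' _ h p ih =>
    apply ih
    -- the eigen-equation at `a` forces neighbors of a zero to be zero
    have h1 := congrFun heig a
    rw [hamil_mulVec, hu, mul_zero, mul_zero, add_zero] at h1
    have h2 : (∑ j : Fin ℓ, if (pathGraph ℓ).Adj a j then ψ j else 0) = 0 := by
      have h3 : ∀ j : Fin ℓ, (if (pathGraph ℓ).Adj a j then 0 - ψ j else 0)
          = - (if (pathGraph ℓ).Adj a j then ψ j else 0) := by
        intro j
        split <;> simp
      rw [Finset.sum_congr rfl (fun j _ => h3 j), Finset.sum_neg_distrib] at h1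
      linarith
    have h4 := (Finset.sum_eq_zero_iff_of_nonneg (fun j _ => by
        by_cases hj : (pathGraph ℓ).Adj a j
        · rw [if_pos hj]; exact hnn j
        · rw [if_neg hj])).mp h2 a' (Finset.mem_univ a')
    rw [if_pos h] at h4
    exact h4

lemma psi_pos (hℓ : 2 ≤ ℓ) {W ψ : Fin ℓ → ℝ} {μ0 : ℝ}
    (hnn : ∀ x, 0 ≤ ψ x) (hnorm : ψ ⬝ᵥ ψ = 1)
    (heig : hamiltonian (pathGraph ℓ) W *ᵥ ψ = fun x => μ0 * ψ x) :
    ∀ x, 0 < ψ x := by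
  by_contra hcon
  push_neg at hcon
  obtain ⟨z, hz⟩ := hcon
  have hz0 : ψ z = 0 := le_antisymm hz (hnn z)
  have hall : ∀ v, ψ v = 0 := by
    intro v
    obtain ⟨w⟩ := SimpleGraph.pathGraph_preconnected ℓ z v
    exact zero_propagates hnn heig w hz0
  rw [dotProduct] at hnorm
  have : (∑ i : Fin ℓ, ψ i * ψ i) = 0 := Finset.sum_eq_zero (fun i _ => by rw [hall i, mul_zero])
  rw [this] at hnorm
  norm_num at hnorm

lemma extv_pos {ψ : Fin ℓ → ℝ} (hpos : ∀ x, 0 < ψ x) {k : ℕ} (hk : k < ℓ) : 0 < extv ψ k := by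
  rw [extv]; rw [dif_pos hk]; exact hpos _

lemma extv_nonneg {ψ : Fin ℓ → ℝ} (hpos : ∀ x, 0 ≤ ψ x) (k : ℕ) : 0 ≤ extv ψ k := by
  by_cases hk : k < ℓ
  · rw [extv, dif_pos hk]; exact hpos _
  · rw [ext_zero hk]

lemma extv_eq (x : Fin ℓ → ℝ) {k : ℕ} (hk : k < ℓ) : extv x k = x ⟨k, hk⟩ := dif_pos hk

lemma master_eq {W ψ : Fin ℓ → ℝ} {μ0 : ℝ}
    (heig : hamiltonian (pathGraph ℓ) W *ᵥ ψ = fun x => μ0 * ψ x)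
    (k : ℕ) (hk : k < ℓ) :
    (if k + 1 < ℓ then extv ψ k - extv ψ (k+1) else 0)
      + (if 0 < k then extv ψ k - extv ψ (k-1) else 0)
      + extv W k * extv ψ k = μ0 * extv ψ k := by
  have h := congrFun heig ⟨k, hk⟩
  rw [hamil_mulVec] at h
  have h2 : (∑ j : Fin ℓ, if (pathGraph ℓ).Adj ⟨k, hk⟩ j then ψ ⟨k, hk⟩ - ψ j else 0)
      = (∑ j : Fin ℓ, if (pathGraph ℓ).Adj ⟨k, hk⟩ j
          then (fun c => extv ψ k - extv ψ c) ↑j else 0) := by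
    refine Finset.sum_congr rfl (fun j _ => ?_)
    have hj : extv ψ ↑j = ψ j := ext_coe ψ j
    have hkk : extv ψ ↑(⟨k, hk⟩ : Fin ℓ) = ψ ⟨k, hk⟩ := ext_coe ψ _
    simp only [hj]
    rw [← hkk]
  rw [h2, nbr_sum (⟨k, hk⟩ : Fin ℓ) (fun c => extv ψ k - extv ψ c)] at h
  have hW : extv W k = W ⟨k, hk⟩ := extv_eq W hk
  have hψ : extv ψ k = ψ ⟨k, hk⟩ := extv_eq ψ hk
  simp only [Fin.val_mk] at h
  rw [← hW, ← hψ] at h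
  exact h

lemma no_valley (hℓ : 2 ≤ ℓ) {W ψ : Fin ℓ → ℝ} {μ0 : ℝ}
    (hbasin : SingleBasin (pathGraph ℓ) W)
    (hpos : ∀ x, 0 < ψ x)
    (heig : hamiltonian (pathGraph ℓ) W *ᵥ ψ = fun x => μ0 * ψ x) :
    ∀ x j y : ℕ, x ≤ j → j ≤ y → y < ℓ → min (extv ψ x) (extv ψ y) ≤ extv ψ j := by
  intro x j y hxj hjy hy
  by_contra hcon
  push_neg at hcon
  have hjx : extv ψ j < extv ψ x := lt_of_lt_of_le hcon (min_le_left _ _)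
  have hjyv : extv ψ j < extv ψ y := lt_of_lt_of_le hcon (min_le_right _ _)
  -- largest minimizer b of extv ψ on Icc x y
  obtain ⟨b0, hb0mem, hb0min⟩ := Finset.exists_min_image (Finset.Icc x y) (extv ψ)
    ⟨j, Finset.mem_Icc.mpr ⟨hxj, hjy⟩⟩
  set T := (Finset.Icc x y).filter (fun k => extv ψ k = extv ψ b0) with hT
  have hTne : T.Nonempty := ⟨b0, Finset.mem_filter.mpr ⟨hb0mem, rfl⟩⟩
  set b := T.max' hTne with hbdef
  have hbT : b ∈ T := T.max'_mem hTne
  have hbmem : b ∈ Finset.Icc x y := (Finset.mem_filter.mp hbT).1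
  have hbval : extv ψ b = extv ψ b0 := (Finset.mem_filter.mp hbT).2
  have hbmin : ∀ k ∈ Finset.Icc x y, extv ψ b ≤ extv ψ k := by
    intro k hk
    rw [hbval]
    exact hb0min k hk
  have hblargest : ∀ k ∈ Finset.Icc x y, b < k → extv ψ b < extv ψ k := by
    intro k hk hbk
    rcases lt_or_eq_of_le (hbmin k hk) with h | h
    · exact h
    · exfalso
      have hkT : k ∈ T := Finset.mem_filter.mpr ⟨hk, by rw [← h, hbval]⟩
      exact absurd (T.le_max' k hkT) (not_le.mpr hbk)
  have hbx : x < b := by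
    rcases Finset.mem_Icc.mp hbmem with ⟨h1, h2⟩
    rcases lt_or_eq_of_le h1 with h | h
    · exact h
    · exfalso
      have := hbmin j (Finset.mem_Icc.mpr ⟨hxj, hjy⟩)
      rw [← h] at this
      linarith
  have hby : b < y := by
    rcases Finset.mem_Icc.mp hbmem with ⟨h1, h2⟩
    rcases lt_or_eq_of_le h2 with h | h
    · exact h
    · exfalso
      have := hbmin j (Finset.mem_Icc.mpr ⟨hxj, hjy⟩)
      rw [h] at this
      linarith
  have hbl : b < ℓ := by omega
  have h1 : extv ψ b < extv ψ (b+1) :=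
    hblargest (b+1) (Finset.mem_Icc.mpr ⟨by omega, by omega⟩) (by omega)
  have h2 : extv ψ b ≤ extv ψ (b-1) :=
    hbmin (b-1) (Finset.mem_Icc.mpr ⟨by omega, by omega⟩)
  have hmb := master_eq heig b hbl
  rw [if_pos (by omega : b + 1 < ℓ), if_pos (by omega : 0 < b)] at hmb
  have hψb : 0 < extv ψ b := extv_pos hpos hbl
  have hWb : μ0 < extv W b := by nlinarith
  -- maximizer p on [0, b]
  obtain ⟨p, hpmem, hpmax⟩ := Finset.exists_max_image (Finset.Icc 0 b) (extv ψ)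
    ⟨x, Finset.mem_Icc.mpr ⟨Nat.zero_le _, by omega⟩⟩
  have hpb : p ≤ b := (Finset.mem_Icc.mp hpmem).2
  have hpx : extv ψ x ≤ extv ψ p := hpmax x (Finset.mem_Icc.mpr ⟨Nat.zero_le _, by omega⟩)
  have hplt : p < b := by
    rcases lt_or_eq_of_le hpb with h | h
    · exact h
    · exfalso
      have hj2 := hbmin j (Finset.mem_Icc.mpr ⟨hxj, hjy⟩)
      rw [h] at hpx
      linarith
  have hpl : p < ℓ := by omega
  have hWp : extv W p ≤ μ0 := by
    have hmp := master_eq heig p hpl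
    rw [if_pos (by omega : p + 1 < ℓ)] at hmp
    have ha1 : extv ψ (p+1) ≤ extv ψ p := hpmax (p+1) (Finset.mem_Icc.mpr ⟨Nat.zero_le _, by omega⟩)
    have hψp : 0 < extv ψ p := extv_pos hpos hpl
    by_cases hp0 : 0 < p
    · rw [if_pos hp0] at hmp
      have ha2 : extv ψ (p-1) ≤ extv ψ p := hpmax (p-1) (Finset.mem_Icc.mpr ⟨Nat.zero_le _, by omega⟩)
      nlinarith
    · rw [if_neg hp0] at hmp
      nlinarith
  -- maximizer q on [b, ℓ-1]
  obtain ⟨q, hqmem, hqmax⟩ := Finset.exists_max_image (Finset.Icc b (ℓ-1)) (extv ψ)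
    ⟨y, Finset.mem_Icc.mpr ⟨by omega, by omega⟩⟩
  have hqb : b ≤ q := (Finset.mem_Icc.mp hqmem).1
  have hql : q < ℓ := by
    have := (Finset.mem_Icc.mp hqmem).2
    omega
  have hqy : extv ψ y ≤ extv ψ q := hqmax y (Finset.mem_Icc.mpr ⟨by omega, by omega⟩)
  have hqgt : b < q := by
    rcases lt_or_eq_of_le hqb with h | h
    · exact h
    · exfalso
      have hj2 := hbmin j (Finset.mem_Icc.mpr ⟨hxj, hjy⟩)
      rw [← h] at hqy
      linarith
  have hWq : extv W q ≤ μ0 := by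
    have hmq := master_eq heig q hql
    rw [if_pos (by omega : 0 < q)] at hmq
    have ha2 : extv ψ (q-1) ≤ extv ψ q := hqmax (q-1) (Finset.mem_Icc.mpr ⟨by omega, by omega⟩)
    have hψq : 0 < extv ψ q := extv_pos hpos hql
    by_cases hq1 : q + 1 < ℓ
    · rw [if_pos hq1] at hmq
      have ha1 : extv ψ (q+1) ≤ extv ψ q := hqmax (q+1) (Finset.mem_Icc.mpr ⟨by omega, by omega⟩)
      nlinarith
    · rw [if_neg hq1] at hmq
      nlinarith
  -- contradiction via the single-basin hypothesis
  have hconn := hbasin (extv W b)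
  set S : Set (Fin ℓ) := {v | W v < extv W b} with hS
  have hPmem : (⟨p, hpl⟩ : Fin ℓ) ∈ S := by
    have : W ⟨p, hpl⟩ = extv W p := (extv_eq W hpl).symm
    simp only [hS, Set.mem_setOf_eq, this]
    linarith
  have hQmem : (⟨q, hql⟩ : Fin ℓ) ∈ S := by
    have : W ⟨q, hql⟩ = extv W q := (extv_eq W hql).symm
    simp only [hS, Set.mem_setOf_eq, this]
    linarith
  have hbnot : ∀ s : Fin ℓ, s ∈ S → (s : ℕ) ≠ b := by
    intro s hs hsb
    have hseq : s = (⟨b, hbl⟩ : Fin ℓ) := Fin.ext hsb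
    rw [hseq] at hs
    have : W ⟨b, hbl⟩ = extv W b := (extv_eq W hbl).symm
    simp only [hS, Set.mem_setOf_eq, this] at hs
    linarith
  obtain ⟨w⟩ := hconn ⟨⟨p, hpl⟩, hPmem⟩ ⟨⟨q, hql⟩, hQmem⟩
  have := induce_walk_lt hbnot w (by simpa using hplt)
  simp only [] at this
  omega


lemma sym_double (F : ℕ → ℕ → ℝ) (hsym : ∀ x y, F x y = F y x) (hdiag : ∀ x, F x x = 0)
    (n : ℕ) : ∑ x ∈ range n, ∑ y ∈ range n, F x y = 2 * ∑ y ∈ range n, ∑ x ∈ range y, F x y := by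
  induction n with
  | zero => simp
  | succ m ih =>
    rw [Finset.sum_range_succ, Finset.sum_range_succ]
    have h1 : ∀ x, ∑ y ∈ range (m+1), F x y = (∑ y ∈ range m, F x y) + F x m := by
      intro x; rw [Finset.sum_range_succ]
    rw [Finset.sum_congr rfl (fun x _ => h1 x), Finset.sum_add_distrib, ih,
      Finset.sum_range_succ, hdiag]
    have h2 : ∑ y ∈ range m, F m y = ∑ x ∈ range m, F x m :=
      Finset.sum_congr rfl (fun y _ => hsym m y)
    rw [h2]
    ring

lemma variance_eq (π g : ℕ → ℝ) (n : ℕ) (hπ1 : ∑ k ∈ range n, π k = 1)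
    (hπg : ∑ k ∈ range n, π k * g k = 0) :
    ∑ k ∈ range n, π k * g k ^ 2 =
      ∑ y ∈ range n, ∑ x ∈ range y, π x * π y * (g x - g y)^2 := by
  have hbody : ∀ x y : ℕ, π x * π y * (g x - g y)^2 =
      (π x * g x ^ 2) * π y + π x * (π y * g y ^ 2) - 2 * ((π x * g x) * (π y * g y)) := by
    intro x y; ring
  have hdouble : ∑ x ∈ range n, ∑ y ∈ range n, π x * π y * (g x - g y)^2
      = 2 * ∑ k ∈ range n, π k * g k ^ 2 := by
    calc ∑ x ∈ range n, ∑ y ∈ range n, π x * π y * (g x - g y)^2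
        = ∑ x ∈ range n, ∑ y ∈ range n,
            ((π x * g x ^ 2) * π y + π x * (π y * g y ^ 2) - 2 * ((π x * g x) * (π y * g y))) :=
          Finset.sum_congr rfl (fun x _ => Finset.sum_congr rfl (fun y _ => hbody x y))
      _ = (∑ x ∈ range n, π x * g x ^ 2) * (∑ y ∈ range n, π y)
            + (∑ x ∈ range n, π x) * (∑ y ∈ range n, π y * g y ^ 2)
            - 2 * ((∑ x ∈ range n, π x * g x) * (∑ y ∈ range n, π y * g y)) := by
          simp only [Finset.sum_add_distrib, Finset.sum_sub_distrib, ← Finset.sum_mul,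
            ← Finset.mul_sum]
      _ = 2 * ∑ k ∈ range n, π k * g k ^ 2 := by
          rw [hπ1, hπg]; ring
  have hsd := sym_double (fun x y => π x * π y * (g x - g y)^2)
    (fun x y => by ring) (fun x => by ring) n
  rw [hsd] at hdouble
  linarith



lemma cs_step (g : ℕ → ℝ) (x y n : ℕ) (hxy : x < y) (hy : y < n) :
    (g x - g y)^2 ≤ ((n:ℝ) - 1) * ∑ k ∈ Finset.Ico x y, (g (k+1) - g k)^2 := by
  have htel : ∑ k ∈ Finset.Ico x y, (g (k+1) - g k) = g y - g x := by
    rw [Finset.sum_Ico_eq_sub _ (le_of_lt hxy), Finset.sum_range_sub, Finset.sum_range_sub]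
    ring
  have hcs := sq_sum_le_card_mul_sum_sq (s := Finset.Ico x y) (f := fun k => g (k+1) - g k)
  rw [htel] at hcs
  have hcard : (#(Finset.Ico x y) : ℝ) = (y : ℝ) - x := by
    rw [Nat.card_Ico]
    have : (x:ℝ) ≤ y := by exact_mod_cast le_of_lt hxy
    push_cast [Nat.cast_sub (le_of_lt hxy)]
    ring
  have hsq : (g x - g y)^2 = (g y - g x)^2 := by ring
  rw [hsq]
  refine le_trans hcs ?_
  rw [hcard]
  have hnn : (0:ℝ) ≤ ∑ k ∈ Finset.Ico x y, (g (k+1) - g k)^2 :=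
    Finset.sum_nonneg (fun k _ => sq_nonneg _)
  have hyx : (y:ℝ) - x ≤ (n:ℝ) - 1 := by
    have : (y:ℝ) ≤ (n:ℝ) - 1 := by
      have : y ≤ n - 1 := by omega
      have h2 : (y:ℝ) ≤ ((n-1 : ℕ):ℝ) := by exact_mod_cast this
      rw [Nat.cast_sub (by omega : 1 ≤ n)] at h2
      simpa using h2
    have hx0 : (0:ℝ) ≤ x := Nat.cast_nonneg x
    linarith
  exact mul_le_mul_of_nonneg_right hyx hnn



lemma pi_bound {Ψ : ℕ → ℝ} (hΨnn : ∀ k, 0 ≤ Ψ k) {ℓ x k y : ℕ}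
    (hval : ∀ x j y : ℕ, x ≤ j → j ≤ y → y < ℓ → min (Ψ x) (Ψ y) ≤ Ψ j)
    (hxk : x ≤ k) (hky : k < y) (hy : y < ℓ) :
    Ψ x ^ 2 * Ψ y ^ 2 ≤ Ψ k * Ψ (k+1) * (Ψ x ^ 2 + Ψ y ^ 2) := by
  have h1 : min (Ψ x) (Ψ y) ≤ Ψ k := hval x k y hxk (by omega) hy
  have h2 : min (Ψ x) (Ψ y) ≤ Ψ (k+1) := hval x (k+1) y (by omega) (by omega) hy
  have hm : 0 ≤ min (Ψ x) (Ψ y) := le_min (hΨnn x) (hΨnn y)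
  have hmm : min (Ψ x) (Ψ y) * min (Ψ x) (Ψ y) ≤ Ψ k * Ψ (k+1) :=
    mul_le_mul h1 h2 hm (le_trans hm h1)
  rcases le_total (Ψ x) (Ψ y) with h | h
  · rw [min_eq_left h] at hmm
    nlinarith [hΨnn x, hΨnn y, sq_nonneg (Ψ y)]
  · rw [min_eq_right h] at hmm
    nlinarith [hΨnn x, hΨnn y, sq_nonneg (Ψ x)]

lemma poincare {ℓ : ℕ} (hℓ : 2 ≤ ℓ) (Ψ g : ℕ → ℝ)
    (hΨnn : ∀ k, 0 ≤ Ψ k)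
    (hval : ∀ x j y : ℕ, x ≤ j → j ≤ y → y < ℓ → min (Ψ x) (Ψ y) ≤ Ψ j)
    (hπ1 : ∑ k ∈ range ℓ, Ψ k ^ 2 = 1)
    (hπg : ∑ k ∈ range ℓ, Ψ k ^ 2 * g k = 0) :
    ∑ k ∈ range ℓ, Ψ k ^ 2 * g k ^ 2 ≤
      (ℓ:ℝ) * ((ℓ:ℝ) - 1) * ∑ k ∈ range ℓ, Ψ k * Ψ (k+1) * (g (k+1) - g k)^2 := by
  set π : ℕ → ℝ := fun k => Ψ k ^ 2 with hπ
  set d : ℕ → ℝ := fun k => (g (k+1) - g k)^2 with hd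
  set Q : ℕ → ℝ := fun k => Ψ k * Ψ (k+1) with hQ
  have hπnn : ∀ k, 0 ≤ π k := fun k => sq_nonneg _
  have hdnn : ∀ k, 0 ≤ d k := fun k => sq_nonneg _
  have hQnn : ∀ k, 0 ≤ Q k := fun k => mul_nonneg (hΨnn k) (hΨnn (k+1))
  -- step A: variance
  rw [variance_eq π g ℓ hπ1 hπg]
  -- step B+C: per-pair bound
  have hBC : ∀ y ∈ range ℓ, ∀ x ∈ range y,
      π x * π y * (g x - g y)^2 ≤
      ((ℓ:ℝ) - 1) * ∑ k ∈ Finset.Ico x y, Q k * (π x + π y) * d k := by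
    intro y hy x hx
    rw [Finset.mem_range] at hy hx
    have hcs := cs_step g x y ℓ hx hy
    have h1 : π x * π y * (g x - g y)^2 ≤
        π x * π y * (((ℓ:ℝ) - 1) * ∑ k ∈ Finset.Ico x y, d k) :=
      mul_le_mul_of_nonneg_left hcs (mul_nonneg (hπnn x) (hπnn y))
    refine le_trans h1 ?_
    rw [Finset.mul_sum, Finset.mul_sum]
    have h2 : ∀ k ∈ Finset.Ico x y, π x * π y * (((ℓ:ℝ)-1) * d k)
        ≤ ((ℓ:ℝ)-1) * (Q k * (π x + π y) * d k) := by
      intro k hk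
      rw [Finset.mem_Ico] at hk
      have hpb := pi_bound hΨnn hval hk.1 hk.2 hy
      have hl1 : (0:ℝ) ≤ (ℓ:ℝ) - 1 := by
        have : (1:ℝ) ≤ (ℓ:ℝ) := by exact_mod_cast (by omega : 1 ≤ ℓ)
        linarith
      have := mul_le_mul_of_nonneg_right hpb (hdnn k)
      calc π x * π y * (((ℓ:ℝ)-1) * d k) = ((ℓ:ℝ)-1) * (π x * π y * d k) := by ring
        _ ≤ ((ℓ:ℝ)-1) * (Q k * (π x + π y) * d k) := by
            apply mul_le_mul_of_nonneg_left _ hl1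
            calc π x * π y * d k = (Ψ x ^2 * Ψ y ^2) * d k := by rw [hπ]
              _ ≤ (Ψ k * Ψ (k+1) * (Ψ x^2 + Ψ y^2)) * d k := this
              _ = Q k * (π x + π y) * d k := by rw [hQ, hπ]
    refine le_trans (Finset.sum_le_sum h2) (le_of_eq ?_)
    rw [Finset.mul_sum]
  have hstepBC := Finset.sum_le_sum (fun y hy => Finset.sum_le_sum (fun x hx => hBC y hy x hx))
  refine le_trans hstepBC ?_
  -- step D: reindex and bound
  have hIco : ∀ x y : ℕ, y ≤ ℓ → ∀ t : ℕ → ℝ,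
      (∑ k ∈ Finset.Ico x y, t k) = ∑ k ∈ range ℓ, if x ≤ k ∧ k < y then t k else 0 := by
    intro x y hy t
    have hf : Finset.filter (fun k => x ≤ k ∧ k < y) (range ℓ) = Finset.Ico x y := by
      ext a
      simp only [Finset.mem_filter, Finset.mem_range, Finset.mem_Ico]
      omega
    rw [← hf, Finset.sum_filter]
  have hRg : ∀ y : ℕ, y ≤ ℓ → ∀ t : ℕ → ℝ,
      (∑ x ∈ range y, t x) = ∑ x ∈ range ℓ, if x < y then t x else 0 := by
    intro y hy t
    have hf : Finset.filter (fun x => x < y) (range ℓ) = range y := by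
      ext a
      simp only [Finset.mem_filter, Finset.mem_range]
      omega
    rw [← hf, Finset.sum_filter]
  have hU : (∑ y ∈ range ℓ, ∑ x ∈ range y,
        ((ℓ:ℝ) - 1) * ∑ k ∈ Finset.Ico x y, Q k * (π x + π y) * d k)
      = ((ℓ:ℝ)-1) * ∑ y ∈ range ℓ, ∑ x ∈ range ℓ, ∑ k ∈ range ℓ,
          (if x ≤ k ∧ k < y then Q k * (π x + π y) * d k else 0) := by
    have step1 : ∀ y ∈ range ℓ, (∑ x ∈ range y,
          ((ℓ:ℝ)-1) * ∑ k ∈ Finset.Ico x y, Q k * (π x + π y) * d k)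
        = ((ℓ:ℝ)-1) * ∑ x ∈ range ℓ, ∑ k ∈ range ℓ,
            (if x ≤ k ∧ k < y then Q k * (π x + π y) * d k else 0) := by
      intro y hy
      rw [Finset.mem_range] at hy
      rw [hRg y (le_of_lt hy) (fun x => ((ℓ:ℝ)-1) * ∑ k ∈ Finset.Ico x y, Q k * (π x + π y) * d k),
        Finset.mul_sum]
      refine Finset.sum_congr rfl (fun x _ => ?_)
      by_cases hxy : x < y
      · rw [if_pos hxy, hIco x y (le_of_lt hy) (fun k => Q k * (π x + π y) * d k)]
      · rw [if_neg hxy]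
        have hz : (∑ k ∈ range ℓ, if x ≤ k ∧ k < y then Q k * (π x + π y) * d k else 0) = 0 :=
          Finset.sum_eq_zero (fun k _ => by rw [if_neg (by omega)])
        rw [hz, mul_zero]
    rw [Finset.sum_congr rfl step1, ← Finset.mul_sum]
  rw [hU]
  -- swap sums so k is outermost
  have hswap : (∑ y ∈ range ℓ, ∑ x ∈ range ℓ, ∑ k ∈ range ℓ,
        (if x ≤ k ∧ k < y then Q k * (π x + π y) * d k else 0))
      = ∑ k ∈ range ℓ, ∑ y ∈ range ℓ, ∑ x ∈ range ℓ,
        (if x ≤ k ∧ k < y then Q k * (π x + π y) * d k else 0) := by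
    calc (∑ y ∈ range ℓ, ∑ x ∈ range ℓ, ∑ k ∈ range ℓ,
          (if x ≤ k ∧ k < y then Q k * (π x + π y) * d k else 0))
        = ∑ y ∈ range ℓ, ∑ k ∈ range ℓ, ∑ x ∈ range ℓ,
          (if x ≤ k ∧ k < y then Q k * (π x + π y) * d k else 0) :=
          Finset.sum_congr rfl (fun y _ => Finset.sum_comm)
      _ = ∑ k ∈ range ℓ, ∑ y ∈ range ℓ, ∑ x ∈ range ℓ,
          (if x ≤ k ∧ k < y then Q k * (π x + π y) * d k else 0) := Finset.sum_comm
  rw [hswap]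
  -- bound inner double sum for each k
  have hinner : ∀ k ∈ range ℓ, (∑ y ∈ range ℓ, ∑ x ∈ range ℓ,
      (if x ≤ k ∧ k < y then Q k * (π x + π y) * d k else 0)) ≤ (ℓ:ℝ) * (Q k * d k) := by
    intro k hk
    rw [Finset.mem_range] at hk
    set A : ℕ → ℝ := fun x => if x ≤ k then π x else 0 with hA
    set B : ℕ → ℝ := fun y => if k < y then (1:ℝ) else 0 with hB
    set C : ℕ → ℝ := fun x => if x ≤ k then (1:ℝ) else 0 with hC
    set D : ℕ → ℝ := fun y => if k < y then π y else 0 with hD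
    have hbody : ∀ y x : ℕ, (if x ≤ k ∧ k < y then Q k * (π x + π y) * d k else 0)
        = Q k * d k * (A x * B y + C x * D y) := by
      intro y x
      have hAx : A x = if x ≤ k then π x else 0 := rfl
      have hBy : B y = if k < y then (1:ℝ) else 0 := rfl
      have hCx : C x = if x ≤ k then (1:ℝ) else 0 := rfl
      have hDy : D y = if k < y then π y else 0 := rfl
      rw [hAx, hBy, hCx, hDy]
      by_cases h1 : x ≤ k <;> by_cases h2 : k < y <;> simp [h1, h2] <;> ring
    have hfact : (∑ y ∈ range ℓ, ∑ x ∈ range ℓ,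
        (if x ≤ k ∧ k < y then Q k * (π x + π y) * d k else 0))
        = Q k * d k * ((∑ x ∈ range ℓ, A x) * (∑ y ∈ range ℓ, B y)
          + (∑ x ∈ range ℓ, C x) * (∑ y ∈ range ℓ, D y)) := by
      calc (∑ y ∈ range ℓ, ∑ x ∈ range ℓ,
          (if x ≤ k ∧ k < y then Q k * (π x + π y) * d k else 0))
          = ∑ y ∈ range ℓ, ∑ x ∈ range ℓ, Q k * d k * (A x * B y + C x * D y) :=
            Finset.sum_congr rfl (fun y _ => Finset.sum_congr rfl (fun x _ => hbody y x))
        _ = Q k * d k * ∑ y ∈ range ℓ, ∑ x ∈ range ℓ, (A x * B y + C x * D y) := by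
            rw [Finset.mul_sum]
            refine Finset.sum_congr rfl (fun y _ => ?_)
            rw [Finset.mul_sum]
        _ = Q k * d k * ((∑ x ∈ range ℓ, A x) * (∑ y ∈ range ℓ, B y)
              + (∑ x ∈ range ℓ, C x) * (∑ y ∈ range ℓ, D y)) := by
            congr 1
            rw [Finset.sum_mul_sum, Finset.sum_mul_sum]
            rw [Finset.sum_comm (s := range ℓ) (t := range ℓ) (f := fun i j => A i * B j),
              Finset.sum_comm (s := range ℓ) (t := range ℓ) (f := fun i j => C i * D j),
              ← Finset.sum_add_distrib]
            refine Finset.sum_congr rfl (fun y _ => ?_)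
            rw [← Finset.sum_add_distrib]
    rw [hfact]
    -- bounds on the four sums
    have hAle : (∑ x ∈ range ℓ, A x) ≤ 1 := by
      rw [← hπ1]
      refine Finset.sum_le_sum (fun x _ => ?_)
      show (if x ≤ k then π x else 0) ≤ π x
      by_cases h : x ≤ k
      · rw [if_pos h]
      · rw [if_neg h]; exact hπnn x
    have hAnn : (0:ℝ) ≤ ∑ x ∈ range ℓ, A x := by
      refine Finset.sum_nonneg (fun x _ => ?_)
      show (0:ℝ) ≤ if x ≤ k then π x else 0
      by_cases h : x ≤ k
      · rw [if_pos h]; exact hπnn x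
      · rw [if_neg h]
    have hDle : (∑ y ∈ range ℓ, D y) ≤ 1 := by
      rw [← hπ1]
      refine Finset.sum_le_sum (fun x _ => ?_)
      show (if k < x then π x else 0) ≤ π x
      by_cases h : k < x
      · rw [if_pos h]
      · rw [if_neg h]; exact hπnn x
    have hDnn : (0:ℝ) ≤ ∑ y ∈ range ℓ, D y := by
      refine Finset.sum_nonneg (fun x _ => ?_)
      show (0:ℝ) ≤ if k < x then π x else 0
      by_cases h : k < x
      · rw [if_pos h]; exact hπnn x
      · rw [if_neg h]
    have hBval : (∑ y ∈ range ℓ, B y) = ((ℓ - (k+1) : ℕ) : ℝ) := by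
      show (∑ y ∈ range ℓ, if k < y then (1:ℝ) else 0) = _
      rw [Finset.sum_boole]
      congr 1
      have : Finset.filter (fun y => k < y) (range ℓ) = Finset.Ico (k+1) ℓ := by
        ext a
        simp only [Finset.mem_filter, Finset.mem_range, Finset.mem_Ico]
        omega
      rw [this, Nat.card_Ico]
    have hCval : (∑ x ∈ range ℓ, C x) = ((k+1 : ℕ) : ℝ) := by
      show (∑ x ∈ range ℓ, if x ≤ k then (1:ℝ) else 0) = _
      rw [Finset.sum_boole]
      congr 1
      have : Finset.filter (fun x => x ≤ k) (range ℓ) = range (k+1) := by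
        ext a
        simp only [Finset.mem_filter, Finset.mem_range]
        omega
      rw [this, Finset.card_range]
    have hsum : (∑ x ∈ range ℓ, A x) * (∑ y ∈ range ℓ, B y)
        + (∑ x ∈ range ℓ, C x) * (∑ y ∈ range ℓ, D y) ≤ (ℓ:ℝ) := by
      have hBnn : (0:ℝ) ≤ ∑ y ∈ range ℓ, B y := by rw [hBval]; positivity
      have hCnn : (0:ℝ) ≤ ∑ x ∈ range ℓ, C x := by rw [hCval]; positivity
      have h1 : (∑ x ∈ range ℓ, A x) * (∑ y ∈ range ℓ, B y) ≤ (∑ y ∈ range ℓ, B y) := by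
        nlinarith
      have h2 : (∑ x ∈ range ℓ, C x) * (∑ y ∈ range ℓ, D y) ≤ (∑ x ∈ range ℓ, C x) := by
        nlinarith
      have h3 : (∑ y ∈ range ℓ, B y) + (∑ x ∈ range ℓ, C x) = (ℓ:ℝ) := by
        rw [hBval, hCval]
        have : (ℓ - (k+1)) + (k+1) = ℓ := by omega
        exact_mod_cast congrArg (Nat.cast : ℕ → ℝ) this
      linarith
    calc Q k * d k * ((∑ x ∈ range ℓ, A x) * (∑ y ∈ range ℓ, B y)
          + (∑ x ∈ range ℓ, C x) * (∑ y ∈ range ℓ, D y))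
        ≤ Q k * d k * (ℓ:ℝ) :=
          mul_le_mul_of_nonneg_left hsum (mul_nonneg (hQnn k) (hdnn k))
      _ = (ℓ:ℝ) * (Q k * d k) := by ring
  have hfin := Finset.sum_le_sum hinner
  calc ((ℓ:ℝ)-1) * ∑ k ∈ range ℓ, ∑ y ∈ range ℓ, ∑ x ∈ range ℓ,
        (if x ≤ k ∧ k < y then Q k * (π x + π y) * d k else 0)
      ≤ ((ℓ:ℝ)-1) * ∑ k ∈ range ℓ, (ℓ:ℝ) * (Q k * d k) := by
        apply mul_le_mul_of_nonneg_left hfin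
        have : (1:ℝ) ≤ (ℓ:ℝ) := by exact_mod_cast (by omega : 1 ≤ ℓ)
        linarith
    _ = (ℓ:ℝ) * ((ℓ:ℝ) - 1) * ∑ k ∈ range ℓ, Q k * d k := by
        rw [← Finset.mul_sum]
        ring
    _ = (ℓ:ℝ) * ((ℓ:ℝ) - 1) * ∑ k ∈ range ℓ, Ψ k * Ψ (k+1) * (g (k+1) - g k)^2 := rfl


variable {ℓ : ℕ}

lemma dirichlet {W ψ f : Fin ℓ → ℝ} (g : ℕ → ℝ) {μ0 : ℝ}
    (heig : hamiltonian (pathGraph ℓ) W *ᵥ ψ = fun x => μ0 * ψ x)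
    (hfg : ∀ i : Fin ℓ, f i = g ↑i * ψ i) :
    f ⬝ᵥ (hamiltonian (pathGraph ℓ) W *ᵥ f)
      = μ0 * (f ⬝ᵥ f)
        + ∑ k ∈ range ℓ, extv ψ k * extv ψ (k+1) * (g (k+1) - g k)^2 := by
  have h1 := dot_hamil W f
  have h2 : μ0 * (f ⬝ᵥ f) =
      (∑ i : Fin ℓ, ∑ j : Fin ℓ, if (pathGraph ℓ).Adj i j then (f i * g ↑i) * (ψ i - ψ j) else 0)
      + ∑ i : Fin ℓ, W i * (f i * f i) := by
    rw [dotProduct, Finset.mul_sum, ← Finset.sum_add_distrib]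
    refine Finset.sum_congr rfl (fun i _ => ?_)
    have hAψ : (∑ j : Fin ℓ, if (pathGraph ℓ).Adj i j then ψ i - ψ j else 0) + W i * ψ i
        = μ0 * ψ i := by
      have := congrFun heig i
      rw [hamil_mulVec] at this
      exact this
    have hexp : μ0 * (f i * f i) = (f i * g ↑i) * (μ0 * ψ i) := by
      rw [hfg i]; ring
    rw [hexp, ← hAψ, mul_add, Finset.mul_sum]
    have hstep : ∀ j : Fin ℓ, (f i * g ↑i) * (if (pathGraph ℓ).Adj i j then ψ i - ψ j else 0)
        = (if (pathGraph ℓ).Adj i j then (f i * g ↑i) * (ψ i - ψ j) else 0) := by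
      intro j; split <;> simp
    rw [Finset.sum_congr rfl (fun j _ => hstep j)]
    congr 1
    rw [hfg i]; ring
  have h3 : f ⬝ᵥ (hamiltonian (pathGraph ℓ) W *ᵥ f) - μ0 * (f ⬝ᵥ f)
      = ∑ i : Fin ℓ, ∑ j : Fin ℓ, if (pathGraph ℓ).Adj i j
          then extv ψ ↑i * extv ψ ↑j * (g ↑i * (g ↑i - g ↑j)) else 0 := by
    rw [h1, h2]
    have : ∀ i j : Fin ℓ, (if (pathGraph ℓ).Adj i j then f i * (f i - f j) else 0)
        - (if (pathGraph ℓ).Adj i j then (f i * g ↑i) * (ψ i - ψ j) else 0)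
        = (if (pathGraph ℓ).Adj i j then extv ψ ↑i * extv ψ ↑j * (g ↑i * (g ↑i - g ↑j)) else 0) := by
      intro i j
      split
      · rw [hfg i, hfg j, ext_coe, ext_coe]; ring
      · ring
    simp only [add_sub_add_right_eq_sub, ← Finset.sum_sub_distrib]
    exact Finset.sum_congr rfl (fun i _ => Finset.sum_congr rfl (fun j _ => this i j))
  have h4 := pg_double_sum (ℓ := ℓ) (fun a b => extv ψ a * extv ψ b * (g a * (g a - g b)))
  rw [h4] at h3
  have h5 : ∀ k ∈ range ℓ, (if k + 1 < ℓ
        then extv ψ k * extv ψ (k+1) * (g k * (g k - g (k+1)))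
          + extv ψ (k+1) * extv ψ k * (g (k+1) * (g (k+1) - g k)) else 0)
      = extv ψ k * extv ψ (k+1) * (g (k+1) - g k)^2 := by
    intro k _
    by_cases h : k + 1 < ℓ
    · rw [if_pos h]; ring
    · rw [if_neg h, ext_zero h]
      ring
  rw [Finset.sum_congr rfl h5] at h3
  linarith

end Stmt16Aux

/-- Poincaré-based gap bound: for a single-basin potential `W` on the path graph on
`ℓ` vertices, the spectral gap of `H = L + diag W` satisfies `γ_H ≥ 1/(ℓ(ℓ−1))`,
independently of `W`. -/
theorem stmt_16 (ℓ : ℕ) (hℓ : 2 ≤ ℓ) (W : Fin ℓ → ℝ)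
    (hbasin : SingleBasin (SimpleGraph.pathGraph ℓ) W) :
    specGap (hamiltonian_isHermitian (SimpleGraph.pathGraph ℓ) W) ≥
      1 / ((ℓ : ℝ) * ((ℓ : ℝ) - 1)) := by
  classical
  have hn : 2 ≤ Fintype.card (Fin ℓ) := by rw [Fintype.card_fin]; exact hℓ
  have hX : (0:ℝ) < (ℓ:ℝ) * ((ℓ:ℝ) - 1) := by
    have h2 : (2:ℝ) ≤ (ℓ:ℝ) := by exact_mod_cast hℓ
    nlinarith
  rw [ge_iff_le]
  refine Stmt16Aux.generic_gap (hamiltonian_isHermitian (SimpleGraph.pathGraph ℓ) W) hn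
    (fun u => Stmt16Aux.habs_ineq W u) (1 / ((ℓ:ℝ) * ((ℓ:ℝ) - 1))) ?_
  intro ψ hψnn hψ1 hψeig f horth
  have hpos := Stmt16Aux.psi_pos hℓ hψnn hψ1 hψeig
  have hval := Stmt16Aux.no_valley hℓ hbasin hpos hψeig
  set Ψ : ℕ → ℝ := Stmt16Aux.extv ψ with hΨ
  set g : ℕ → ℝ := fun k => Stmt16Aux.extv f k / Ψ k with hg
  have hΨpos : ∀ k, k < ℓ → 0 < Ψ k := fun k hk => Stmt16Aux.extv_pos hpos hk
  have hfg : ∀ i : Fin ℓ, f i = g ↑i * ψ i := by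
    intro i
    have h1 : Ψ ↑i = ψ i := Stmt16Aux.ext_coe ψ i
    have h2 : Stmt16Aux.extv f ↑i = f i := Stmt16Aux.ext_coe f i
    have h3 : g ↑i = Stmt16Aux.extv f ↑i / Ψ ↑i := rfl
    rw [h3, h1, h2, div_mul_cancel₀]
    exact ne_of_gt (hpos i)
  have hdir := Stmt16Aux.dirichlet g hψeig hfg
  have hπ1 : ∑ k ∈ Finset.range ℓ, Ψ k ^ 2 = 1 := by
    rw [← hψ1, Stmt16Aux.dot_ext]
    exact Finset.sum_congr rfl (fun k _ => sq (Ψ k))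
  have hπg : ∑ k ∈ Finset.range ℓ, Ψ k ^ 2 * g k = 0 := by
    have h3 : ∀ k ∈ Finset.range ℓ, Ψ k ^ 2 * g k = Stmt16Aux.extv f k * Stmt16Aux.extv ψ k := by
      intro k hk
      have hne := ne_of_gt (hΨpos k (Finset.mem_range.mp hk))
      have h4 : g k = Stmt16Aux.extv f k / Ψ k := rfl
      rw [h4]
      field_simp
      ring
    rw [Finset.sum_congr rfl h3, ← Stmt16Aux.dot_ext]
    exact horth
  have hff : f ⬝ᵥ f = ∑ k ∈ Finset.range ℓ, Ψ k ^ 2 * g k ^ 2 := by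
    rw [Stmt16Aux.dot_ext]
    refine Finset.sum_congr rfl (fun k hk => ?_)
    have hne := ne_of_gt (hΨpos k (Finset.mem_range.mp hk))
    have h4 : g k = Stmt16Aux.extv f k / Ψ k := rfl
    rw [h4]
    field_simp
  have hΨnn' : ∀ k, 0 ≤ Ψ k := Stmt16Aux.extv_nonneg (fun x => le_of_lt (hpos x))
  have hpo := Stmt16Aux.poincare hℓ Ψ g hΨnn' hval hπ1 hπg
  set D : ℝ := ∑ k ∈ Finset.range ℓ, Ψ k * Ψ (k+1) * (g (k+1) - g k)^2 with hD
  have hD0 : 0 ≤ D :=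
    Finset.sum_nonneg (fun k _ =>
      mul_nonneg (mul_nonneg (hΨnn' k) (hΨnn' (k+1))) (sq_nonneg _))
  have h5 : f ⬝ᵥ f ≤ (ℓ:ℝ) * ((ℓ:ℝ) - 1) * D := by
    rw [hff]
    exact hpo
  have h6 : (1 / ((ℓ:ℝ) * ((ℓ:ℝ) - 1))) * (f ⬝ᵥ f) ≤ D := by
    calc (1 / ((ℓ:ℝ) * ((ℓ:ℝ) - 1))) * (f ⬝ᵥ f)
        ≤ (1 / ((ℓ:ℝ) * ((ℓ:ℝ) - 1))) * ((ℓ:ℝ) * ((ℓ:ℝ) - 1) * D) := by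
          apply mul_le_mul_of_nonneg_left h5
          positivity
      _ = D := by
          have h2ℓ : (2:ℝ) ≤ (ℓ:ℝ) := by exact_mod_cast hℓ
          have : (ℓ:ℝ) - 1 ≠ 0 := ne_of_gt (by linarith)
          field_simp
  rw [hdir]
  have hexp : (sortedEigenvalues (hamiltonian_isHermitian (SimpleGraph.pathGraph ℓ) W)
        ⟨0, by omega⟩ + 1 / ((ℓ:ℝ) * ((ℓ:ℝ) - 1))) * (f ⬝ᵥ f)
      = sortedEigenvalues (hamiltonian_isHermitian (SimpleGraph.pathGraph ℓ) W)
        ⟨0, by omega⟩ * (f ⬝ᵥ f) + (1 / ((ℓ:ℝ) * ((ℓ:ℝ) - 1))) * (f ⬝ᵥ f) := by ring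
  rw [hexp]
  linarith
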